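/- Let n ∈ ℕ, 1 ≤ q < ∞ and ε ≥ 0. If 1 − ε^q Σ_{k=1}^{n} 1/t_k^q ≥ 0 set m = n; otherwise choose m ∈ {0,1,…,n} such that 1 − ε^q Σ_{k=1}^{m} 1/t_k^q ≥ 0 and 1 − ε^q Σ_{k=1}^{m+1} 1/t_k^q < 0. Then E(W^T_q, I^n_{ε,∞}) = E(W^T_q, I^n_{ε,∞}, Φ*_m) = ( t_{m+1}^q + ε^q Σ_{k=1}^{m} (1 − t_{m+1}^q/t_k^q) )^{1/q}. -/

import Mathlib

open scoped ENNReal NNReal BigOperators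


lemma two_point_rpow {c A B q : ℝ} (hc0 : 0 ≤ c) (hc1 : c ≤ 1) (hA : 0 ≤ A) (hB : 0 ≤ B)
    (hq : 1 ≤ q) : (c*A + (1-c)*B) ^ q ≤ c*A^q + (1-c)*B^q := by
  have h1c : (0:ℝ) ≤ 1 - c := by linarith
  have := NNReal.rpow_arith_mean_le_arith_mean2_rpow ⟨c, hc0⟩ ⟨1-c, h1c⟩ ⟨A, hA⟩ ⟨B, hB⟩
    (by ext; show c + (1 - c) = 1; ring) hq
  have h2 := NNReal.coe_le_coe.mpr this
  push_cast [NNReal.coe_rpow] at h2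
  convert h2 using 3 <;> rfl

lemma nnnorm_rpow_eq (q : ℝ) (hq : 0 ≤ q) (z : ℂ) :
    (‖z‖₊ : ℝ≥0∞) ^ q = ENNReal.ofReal (‖z‖ ^ q) := by
  rw [← ENNReal.ofReal_coe_nnreal, coe_nnnorm, ← ENNReal.ofReal_rpow_of_nonneg (norm_nonneg z) hq]

/-- The `ℓ_q` (quasi-)norm `(∑ |x_k|^q)^{1/q}` of a complex sequence, valued in `ℝ≥0∞`. -/
noncomputable def lqNorm (q : ℝ) (x : ℕ → ℂ) : ℝ≥0∞ :=
  (∑' k, (‖x k‖₊ : ℝ≥0∞) ^ q) ^ (1 / q)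


lemma lqNorm_pow (q : ℝ) (hq : q ≠ 0) (x : ℕ → ℂ) :
    (lqNorm q x) ^ q = ∑' k, (‖x k‖₊ : ℝ≥0∞) ^ q := by
  rw [lqNorm, ← ENNReal.rpow_mul, one_div, inv_mul_cancel₀ hq, ENNReal.rpow_one]

/-- The class `W^T_q = {Th : h ∈ ℓ_q, ‖h‖_q ≤ 1}`, where `T` is the diagonal operator
determined by the sequence `t` (0-based indexing: `t k` is the paper's `t_{k+1}`). -/
def WT (q : ℝ) (t : ℕ → ℝ) : Set (ℕ → ℂ) :=
  {x | ∃ h : ℕ → ℂ, (∀ k, x k = (t k : ℂ) * h k) ∧ lqNorm q h ≤ 1}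

/-- The error `E(W, I, Φ) = sup_{x ∈ W} sup_{a ∈ I x} ‖x - Φ a‖_q` of a recovery
method `Φ`, measured in `ℓ_q`. -/
noncomputable def recErr {Z : Type*} (q : ℝ) (W : Set (ℕ → ℂ))
    (I : (ℕ → ℂ) → Set Z) (Φ : Z → ℕ → ℂ) : ℝ≥0∞ :=
  ⨆ x ∈ W, ⨆ a ∈ I x, lqNorm q (fun k => x k - Φ a k)

/-- The error of optimal recovery `E(W, I) = inf_Φ E(W, I, Φ)`. -/
noncomputable def optErr {Z : Type*} (q : ℝ) (W : Set (ℕ → ℂ))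
    (I : (ℕ → ℂ) → Set Z) : ℝ≥0∞ :=
  ⨅ Φ : Z → ℕ → ℂ, recErr q W I Φ

/-- The method `Φ*_m(a) = (a_1(1 − t_{m+1}^q/t_1^q), …, a_m(1 − t_{m+1}^q/t_m^q), 0, …)`
for information consisting of the first `n` coordinates (0-based: `t m` is the paper's
`t_{m+1}`); `PhiStar q t n 0` is the zero method `Φ*_0`. -/
noncomputable def PhiStar (q : ℝ) (t : ℕ → ℝ) (n m : ℕ) (a : Fin n → ℂ) : ℕ → ℂ :=
  fun k => if h : k < n ∧ k < m then ((1 - t m ^ q / t k ^ q : ℝ) : ℂ) * a ⟨k, h.1⟩ else 0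

/-- The information mapping `I^n_{ε,∞}(x) = {a ∈ ℂⁿ : max_{1≤k≤n} |x_k − a_k| ≤ ε}`. -/
def infoSup (n : ℕ) (ε : ℝ) (x : ℕ → ℂ) : Set (Fin n → ℂ) :=
  {a | ∀ k : Fin n, ‖x (k : ℕ) - a k‖ ≤ ε}

/-- Theorem 2: optimal recovery of `W^T_q` from the first `n` coordinates
known with an error measured in `ℓ^n_∞`. -/
theorem optimal_recovery_sup_error
    (n : ℕ) (hn : 1 ≤ n) (q : ℝ) (hq : 1 ≤ q)
    (t : ℕ → ℝ) (htpos : ∀ k, 0 < t k) (htmono : Antitone t)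
    (ε : ℝ) (hε : 0 ≤ ε) (m : ℕ)
    (hm : (1 - ε ^ q * ∑ k ∈ Finset.range n, 1 / t k ^ q ≥ 0 ∧ m = n) ∨
      (m ≤ n ∧ 1 - ε ^ q * ∑ k ∈ Finset.range m, 1 / t k ^ q ≥ 0 ∧
        1 - ε ^ q * ∑ k ∈ Finset.range (m + 1), 1 / t k ^ q < 0)) :
    optErr q (WT q t) (infoSup n ε) =
      recErr q (WT q t) (infoSup n ε) (PhiStar q t n m) ∧
    recErr q (WT q t) (infoSup n ε) (PhiStar q t n m) =
      ENNReal.ofReal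
        ((t m ^ q + ε ^ q * ∑ k ∈ Finset.range m, (1 - t m ^ q / t k ^ q)) ^ (1 / q)) := by
  have hq0 : (0:ℝ) < q := lt_of_lt_of_le one_pos hq
  have hqne : q ≠ 0 := ne_of_gt hq0
  have hinvq : (0:ℝ) ≤ 1/q := by positivity
  have hmn : m ≤ n := by rcases hm with ⟨_, rfl⟩ | ⟨h, _, _⟩; exacts [le_rfl, h]
  have htkq : ∀ k, 0 < t k ^ q := fun k => Real.rpow_pos_of_pos (htpos k) q
  set β := t m ^ q with hβ
  have hβpos : 0 < β := htkq m
  have hc1 : ∀ k, k < m → β / t k ^ q ≤ 1 := by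
    intro k hk
    rw [div_le_one (htkq k)]
    exact Real.rpow_le_rpow (htpos m).le (htmono hk.le) hq0.le
  have hc0 : ∀ k, 0 ≤ β / t k ^ q := fun k => div_nonneg hβpos.le (htkq k).le
  have hSnn : (0:ℝ) ≤ 1 - ε ^ q * ∑ k ∈ Finset.range m, 1 / t k ^ q := by
    rcases hm with ⟨h1, rfl⟩ | ⟨_, h2, _⟩
    · exact h1
    · exact h2
  set S := ∑ k ∈ Finset.range m, 1 / t k ^ q with hS
  set Vq := β + ε ^ q * ∑ k ∈ Finset.range m, (1 - β / t k ^ q) with hVq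
  have hVqnn : 0 ≤ Vq := by
    refine add_nonneg hβpos.le (mul_nonneg (Real.rpow_nonneg hε q) (Finset.sum_nonneg ?_))
    exact fun i hi => sub_nonneg.mpr (hc1 i (Finset.mem_range.mp hi))
  have hVq' : Vq = m * ε ^ q + β * (1 - ε ^ q * S) := by
    have hsplit : ∑ k ∈ Finset.range m, (1 - β / t k ^ q) = (m:ℝ) - β * S := by
      rw [Finset.sum_sub_distrib, Finset.sum_const, Finset.card_range, nsmul_eq_mul, mul_one,
        hS, Finset.mul_sum]
      congr 1
      exact Finset.sum_congr rfl fun i _ => (mul_one_div β _).symm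
    rw [hVq, hsplit]; ring
  -- Upper bound for PhiStar
  have hub : recErr q (WT q t) (infoSup n ε) (PhiStar q t n m) ≤
      ENNReal.ofReal (Vq ^ (1/q)) := by
    refine iSup₂_le fun x hx => iSup₂_le fun a ha => ?_
    obtain ⟨h, hxh, hh⟩ := hx
    have hU : ∑' k, (‖h k‖₊ : ℝ≥0∞) ^ q ≤ 1 := by
      rw [← lqNorm_pow q hqne]
      calc (lqNorm q h) ^ q ≤ 1 ^ q := ENNReal.rpow_le_rpow hh hq0.le
        _ = 1 := ENNReal.one_rpow q
    set s : ℕ → ℝ≥0∞ :=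
      fun k => if k < m then ENNReal.ofReal ((1 - β / t k ^ q) * ε ^ q) else 0 with hs
    have hxknorm : ∀ k, ‖x k‖ = t k * ‖h k‖ := by
      intro k
      rw [hxh k, norm_mul, Complex.norm_real, Real.norm_of_nonneg (htpos k).le]
    have key : ∀ k, (‖x k - PhiStar q t n m a k‖₊ : ℝ≥0∞) ^ q ≤
        ENNReal.ofReal β * (‖h k‖₊ : ℝ≥0∞) ^ q + s k := by
      intro k
      rw [nnnorm_rpow_eq q hq0.le, nnnorm_rpow_eq q hq0.le,
        ← ENNReal.ofReal_mul hβpos.le]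
      by_cases hkm : k < m
      · have hkn : k < n := lt_of_lt_of_le hkm hmn
        have hPhi : PhiStar q t n m a k = ((1 - β / t k ^ q : ℝ) : ℂ) * a ⟨k, hkn⟩ := by
          simp only [PhiStar]
          rw [dif_pos (⟨hkn, hkm⟩ : k < n ∧ k < m)]
        have hck0 := hc0 k
        have hck1 := hc1 k hkm
        have hae : ‖a ⟨k, hkn⟩ - x k‖ ≤ ε := by rw [norm_sub_rev]; exact ha ⟨k, hkn⟩
        have heq : x k - PhiStar q t n m a k =
            ((β / t k ^ q : ℝ) : ℂ) * x k - ((1 - β / t k ^ q : ℝ) : ℂ) * (a ⟨k, hkn⟩ - x k) := by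
          rw [hPhi]; push_cast; ring
        have hnb : ‖x k - PhiStar q t n m a k‖ ≤
            (β / t k ^ q) * (t k * ‖h k‖) + (1 - β / t k ^ q) * ε := by
          rw [heq]
          refine le_trans (norm_sub_le _ _) ?_
          rw [norm_mul, norm_mul, Complex.norm_real, Complex.norm_real,
            Real.norm_of_nonneg hck0, Real.norm_of_nonneg (by linarith : (0:ℝ) ≤ 1 - β / t k ^ q),
            hxknorm k]
          gcongr
        have r1 := Real.rpow_le_rpow (norm_nonneg _) hnb hq0.le
        have r2 := two_point_rpow (A := t k * ‖h k‖) (B := ε) hck0 hck1 (mul_nonneg (htpos k).le (norm_nonneg (h k))) hε hq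
        have r3 : (β / t k ^ q) * (t k * ‖h k‖) ^ q = β * ‖h k‖ ^ q := by
          rw [Real.mul_rpow (htpos k).le (norm_nonneg _)]
          field_simp [(htkq k).ne']
        rw [r3] at r2
        have hsk : s k = ENNReal.ofReal ((1 - β / t k ^ q) * ε ^ q) := by
          simp only [hs]; rw [if_pos hkm]
        rw [hsk, ← ENNReal.ofReal_add (mul_nonneg hβpos.le (Real.rpow_nonneg (norm_nonneg _) q))
          (mul_nonneg (sub_nonneg.mpr hck1) (Real.rpow_nonneg hε q))]
        exact ENNReal.ofReal_le_ofReal (by linarith)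
      · have hPhi : PhiStar q t n m a k = 0 := by
          simp only [PhiStar]
          rw [dif_neg (fun hcon => hkm hcon.2)]
        have hsk : s k = 0 := by simp only [hs]; rw [if_neg hkm]
        rw [hPhi, sub_zero, hsk, add_zero]
        apply ENNReal.ofReal_le_ofReal
        rw [hxknorm k, Real.mul_rpow (htpos k).le (norm_nonneg _)]
        have htk : t k ^ q ≤ β := Real.rpow_le_rpow (htpos k).le (htmono (not_lt.mp hkm)) hq0.le
        exact mul_le_mul_of_nonneg_right htk (Real.rpow_nonneg (norm_nonneg _) q)
    have hsum : ∑' k, (‖x k - PhiStar q t n m a k‖₊ : ℝ≥0∞) ^ q ≤ ENNReal.ofReal Vq := by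
      calc ∑' k, (‖x k - PhiStar q t n m a k‖₊ : ℝ≥0∞) ^ q
          ≤ ∑' k, (ENNReal.ofReal β * (‖h k‖₊ : ℝ≥0∞) ^ q + s k) := ENNReal.tsum_le_tsum key
        _ = ENNReal.ofReal β * (∑' k, (‖h k‖₊ : ℝ≥0∞) ^ q) + ∑' k, s k := by
            rw [ENNReal.tsum_add, ENNReal.tsum_mul_left]
        _ ≤ ENNReal.ofReal β * 1 + ∑' k, s k := by gcongr
        _ = ENNReal.ofReal β +
            ENNReal.ofReal (∑ k ∈ Finset.range m, (1 - β / t k ^ q) * ε ^ q) := by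
            rw [mul_one]
            congr 1
            rw [tsum_eq_sum (s := Finset.range m)
              (fun b hb => by simp only [hs]; rw [if_neg (by simpa using hb)])]
            rw [ENNReal.ofReal_sum_of_nonneg (fun i hi => mul_nonneg
              (sub_nonneg.mpr (hc1 i (Finset.mem_range.mp hi))) (Real.rpow_nonneg hε q))]
            refine Finset.sum_congr rfl fun i hi => ?_
            simp only [hs]; rw [if_pos (Finset.mem_range.mp hi)]
        _ = ENNReal.ofReal Vq := by
            rw [← ENNReal.ofReal_add hβpos.le (Finset.sum_nonneg (fun i hi => mul_nonneg
              (sub_nonneg.mpr (hc1 i (Finset.mem_range.mp hi))) (Real.rpow_nonneg hε q)))]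
            congr 1
            rw [hVq, ← Finset.sum_mul]
            ring
    rw [lqNorm, ← ENNReal.ofReal_rpow_of_nonneg hVqnn hinvq]
    exact ENNReal.rpow_le_rpow hsum hinvq
  -- Extremal element
  set lam := (1 - ε ^ q * S) ^ (1/q) with hlamdef
  have hlamnn : 0 ≤ lam := Real.rpow_nonneg hSnn _
  have hlamq : lam ^ q = 1 - ε ^ q * S := by
    rw [hlamdef, ← Real.rpow_mul hSnn, one_div, inv_mul_cancel₀ hqne, Real.rpow_one]
  set x : ℕ → ℂ := fun k => if k < m then (ε:ℂ) else if k = m then ((t m * lam : ℝ):ℂ) else 0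
    with hxdef
  set g : ℕ → ℂ := fun k => if k < m then ((ε / t k : ℝ):ℂ) else if k = m then ((lam : ℝ):ℂ) else 0
    with hgdef
  have hgm : g m = ((lam : ℝ):ℂ) := by simp [hgdef]
  have hxm : x m = ((t m * lam : ℝ):ℂ) := by simp [hxdef]
  have hxg : ∀ k, x k = (t k : ℂ) * g k := by
    intro k
    simp only [hxdef, hgdef]
    by_cases hkm : k < m
    · rw [if_pos hkm, if_pos hkm]
      have htne : (t k : ℂ) ≠ 0 := Complex.ofReal_ne_zero.mpr (htpos k).ne'
      push_cast
      field_simp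
    · rw [if_neg hkm, if_neg hkm]
      by_cases hk2 : k = m
      · rw [if_pos hk2, if_pos hk2, hk2]; push_cast; ring
      · rw [if_neg hk2, if_neg hk2, mul_zero]
  have hvanish : ∀ b ∉ Finset.range (m+1), (‖x b‖₊ : ℝ≥0∞) ^ q = 0 := by
    intro b hb
    simp only [Finset.mem_range, not_lt] at hb
    have hb1 : ¬ b < m := by omega
    have hb2 : b ≠ m := by omega
    simp only [hxdef, if_neg hb1, if_neg hb2]
    rw [nnnorm_zero, ENNReal.coe_zero, ENNReal.zero_rpow_of_pos hq0]
  have hgvanish : ∀ b ∉ Finset.range (m+1), (‖g b‖₊ : ℝ≥0∞) ^ q = 0 := by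
    intro b hb
    simp only [Finset.mem_range, not_lt] at hb
    have hb1 : ¬ b < m := by omega
    have hb2 : b ≠ m := by omega
    simp only [hgdef, if_neg hb1, if_neg hb2]
    rw [nnnorm_zero, ENNReal.coe_zero, ENNReal.zero_rpow_of_pos hq0]
  have hgnorm : lqNorm q g = 1 := by
    have hsum : ∑' k, (‖g k‖₊ : ℝ≥0∞) ^ q = 1 := by
      rw [tsum_eq_sum hgvanish, Finset.sum_range_succ]
      have e1 : ∀ k ∈ Finset.range m, (‖g k‖₊ : ℝ≥0∞) ^ q =
          ENNReal.ofReal (ε ^ q * (1 / t k ^ q)) := by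
        intro k hk
        have hk' := Finset.mem_range.mp hk
        simp only [hgdef, if_pos hk']
        rw [nnnorm_rpow_eq q hq0.le]
        congr 1
        rw [Complex.norm_real, Real.norm_of_nonneg (div_nonneg hε (htpos k).le),
          Real.div_rpow hε (htpos k).le, div_eq_mul_one_div]
      have e2 : (‖g m‖₊ : ℝ≥0∞) ^ q = ENNReal.ofReal (1 - ε ^ q * S) := by
        rw [hgm, nnnorm_rpow_eq q hq0.le]
        congr 1
        rw [Complex.norm_real, Real.norm_of_nonneg hlamnn, hlamq]
      rw [Finset.sum_congr rfl e1, e2,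
        ← ENNReal.ofReal_sum_of_nonneg (fun i hi => mul_nonneg (Real.rpow_nonneg hε q)
          (one_div_nonneg.mpr (htkq i).le)), ← Finset.mul_sum, ← hS,
        ← ENNReal.ofReal_add (mul_nonneg (Real.rpow_nonneg hε q)
          (Finset.sum_nonneg fun i hi => one_div_nonneg.mpr (htkq i).le) |>.trans_eq rfl) hSnn]
      have htriv : ε ^ q * S + (1 - ε ^ q * S) = 1 := by ring
      rw [htriv, ENNReal.ofReal_one]
    rw [lqNorm, hsum, ENNReal.one_rpow]
  have hxW : x ∈ WT q t := ⟨g, hxg, le_of_eq hgnorm⟩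
  have hxW' : (fun k => -x k) ∈ WT q t := by
    refine ⟨fun k => -g k, fun k => show -x k = (t k : ℂ) * -g k by rw [hxg k]; ring, ?_⟩
    have : lqNorm q (fun k => -g k) = lqNorm q g := by
      rw [lqNorm, lqNorm]
      congr 1
      exact tsum_congr fun k => by rw [nnnorm_neg]
    rw [this, hgnorm]
  have hxm_le : m < n → t m * lam ≤ ε := by
    intro hmn'
    rcases hm with ⟨_, hmeq⟩ | ⟨_, _, hneg⟩
    · exact absurd hmn' (by omega)
    · rw [Finset.sum_range_succ, ← hS, mul_add] at hneg
      have h6 : 1 - ε ^ q * S < ε ^ q * (1 / t m ^ q) := by linarith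
      have h5 : β * (1 - ε ^ q * S) ≤ ε ^ q := by
        calc β * (1 - ε ^ q * S) ≤ β * (ε ^ q * (1 / t m ^ q)) :=
              mul_le_mul_of_nonneg_left h6.le hβpos.le
          _ = ε ^ q := by rw [hβ]; field_simp [(htkq m).ne']
      have h7 : (t m * lam) ^ q ≤ ε ^ q := by
        rw [Real.mul_rpow (htpos m).le hlamnn, hlamq]; exact h5
      exact (Real.rpow_le_rpow_iff (mul_nonneg (htpos m).le hlamnn) hε hq0).mp h7
  have hxnorm_le : ∀ k, k < n → ‖x k‖ ≤ ε := by
    intro k hk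
    simp only [hxdef]
    by_cases hkm : k < m
    · rw [if_pos hkm, Complex.norm_real, Real.norm_of_nonneg hε]
    · rw [if_neg hkm]
      by_cases hk2 : k = m
      · rw [if_pos hk2, Complex.norm_real,
          Real.norm_of_nonneg (mul_nonneg (htpos m).le hlamnn)]
        exact hxm_le (hk2 ▸ hk)
      · rw [if_neg hk2, norm_zero]; exact hε
  have h0x : (fun _ => (0:ℂ)) ∈ infoSup n ε x := by
    intro k
    rw [sub_zero]
    exact hxnorm_le k k.isLt
  have h0x' : (fun _ => (0:ℂ)) ∈ infoSup n ε (fun k => -x k) := by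
    intro k
    rw [sub_zero, norm_neg]
    exact hxnorm_le k k.isLt
  have hxsum : ∑' k, (‖x k‖₊ : ℝ≥0∞) ^ q = ENNReal.ofReal Vq := by
    rw [tsum_eq_sum hvanish, Finset.sum_range_succ]
    have e1 : ∀ k ∈ Finset.range m, (‖x k‖₊ : ℝ≥0∞) ^ q = ENNReal.ofReal (ε ^ q) := by
      intro k hk
      have hk' := Finset.mem_range.mp hk
      simp only [hxdef, if_pos hk']
      rw [nnnorm_rpow_eq q hq0.le]
      congr 1
      rw [Complex.norm_real, Real.norm_of_nonneg hε]
    have e2 : (‖x m‖₊ : ℝ≥0∞) ^ q = ENNReal.ofReal (β * (1 - ε ^ q * S)) := by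
      rw [hxm, nnnorm_rpow_eq q hq0.le]
      congr 1
      rw [Complex.norm_real, Real.norm_of_nonneg (mul_nonneg (htpos m).le hlamnn),
        Real.mul_rpow (htpos m).le hlamnn, hlamq, hβ]
    rw [Finset.sum_congr rfl e1, e2, Finset.sum_const, Finset.card_range, nsmul_eq_mul,
      ← ENNReal.ofReal_natCast m, ← ENNReal.ofReal_mul (Nat.cast_nonneg m),
      ← ENNReal.ofReal_add (mul_nonneg (Nat.cast_nonneg m) (Real.rpow_nonneg hε q))
        (mul_nonneg hβpos.le hSnn)]
    rw [hVq']
  -- Lower bound for an arbitrary method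
  have hlb : ∀ Φ : (Fin n → ℂ) → ℕ → ℂ,
      ENNReal.ofReal (Vq ^ (1/q)) ≤ recErr q (WT q t) (infoSup n ε) Φ := by
    intro Φ
    set R := recErr q (WT q t) (infoSup n ε) Φ with hR
    set y : ℕ → ℂ := Φ (fun _ => 0) with hy
    have hA : lqNorm q (fun k => x k - y k) ≤ R :=
      le_iSup₂_of_le x hxW (le_iSup₂_of_le (fun _ => 0) h0x le_rfl)
    have hB : lqNorm q (fun k => -x k - y k) ≤ R :=
      le_iSup₂_of_le (fun k => -x k) hxW' (le_iSup₂_of_le (fun _ => 0) h0x' le_rfl)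
    have hAq : ∑' k, (‖x k - y k‖₊ : ℝ≥0∞) ^ q ≤ R ^ q := by
      rw [← lqNorm_pow q hqne]
      exact ENNReal.rpow_le_rpow hA hq0.le
    have hBq : ∑' k, (‖-x k - y k‖₊ : ℝ≥0∞) ^ q ≤ R ^ q := by
      rw [← lqNorm_pow q hqne]
      exact ENNReal.rpow_le_rpow hB hq0.le
    have hkey : ∀ k, (‖x k‖₊ : ℝ≥0∞) ^ q ≤
        ((‖x k - y k‖₊ : ℝ≥0∞) ^ q + (‖-x k - y k‖₊ : ℝ≥0∞) ^ q) * 2⁻¹ := by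
      intro k
      have hid : (x k - y k) - (-x k - y k) = (2:ℝ) • x k := by
        rw [two_smul]; ring
      have h2x : 2 * ‖x k‖ ≤ ‖x k - y k‖ + ‖-x k - y k‖ := by
        have htr := norm_sub_le (x k - y k) (-x k - y k)
        rw [hid, norm_smul, Real.norm_ofNat] at htr
        linarith
      have hr : ‖x k‖ ≤ (1/2) * ‖x k - y k‖ + (1 - 1/2) * ‖-x k - y k‖ := by
        linarith
      have r1 := Real.rpow_le_rpow (norm_nonneg _) hr hq0.le
      have r2 := two_point_rpow (c := 1/2) (A := ‖x k - y k‖) (B := ‖-x k - y k‖)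
        (by norm_num) (by norm_num) (norm_nonneg _) (norm_nonneg _) hq
      have r3 : ‖x k‖ ^ q ≤ (‖x k - y k‖ ^ q + ‖-x k - y k‖ ^ q) * (1/2) := by
        calc ‖x k‖ ^ q ≤ _ := le_trans r1 r2
          _ = (‖x k - y k‖ ^ q + ‖-x k - y k‖ ^ q) * (1/2) := by ring
      rw [nnnorm_rpow_eq q hq0.le, nnnorm_rpow_eq q hq0.le, nnnorm_rpow_eq q hq0.le]
      calc ENNReal.ofReal (‖x k‖ ^ q)
          ≤ ENNReal.ofReal ((‖x k - y k‖ ^ q + ‖-x k - y k‖ ^ q) * (1/2)) :=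
            ENNReal.ofReal_le_ofReal r3
        _ = (ENNReal.ofReal (‖x k - y k‖ ^ q) + ENNReal.ofReal (‖-x k - y k‖ ^ q)) * 2⁻¹ := by
            rw [ENNReal.ofReal_mul (by positivity),
              ENNReal.ofReal_add (Real.rpow_nonneg (norm_nonneg _) q)
                (Real.rpow_nonneg (norm_nonneg _) q)]
            congr 1
            rw [show (1/2 : ℝ) = 2⁻¹ by norm_num, ENNReal.ofReal_inv_of_pos two_pos,
              ENNReal.ofReal_ofNat]
    have hsum2 : ENNReal.ofReal Vq ≤ R ^ q := by
      rw [← hxsum]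
      calc ∑' k, (‖x k‖₊ : ℝ≥0∞) ^ q
          ≤ ∑' k, (((‖x k - y k‖₊ : ℝ≥0∞) ^ q + (‖-x k - y k‖₊ : ℝ≥0∞) ^ q) * 2⁻¹) :=
            ENNReal.tsum_le_tsum hkey
        _ = (∑' k, ((‖x k - y k‖₊ : ℝ≥0∞) ^ q + (‖-x k - y k‖₊ : ℝ≥0∞) ^ q)) * 2⁻¹ :=
            ENNReal.tsum_mul_right
        _ = ((∑' k, (‖x k - y k‖₊ : ℝ≥0∞) ^ q) + ∑' k, (‖-x k - y k‖₊ : ℝ≥0∞) ^ q) * 2⁻¹ := by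
            rw [ENNReal.tsum_add]
        _ ≤ (R ^ q + R ^ q) * 2⁻¹ := by gcongr
        _ = R ^ q := by
            rw [← two_mul, mul_comm (2:ℝ≥0∞), mul_assoc,
              ENNReal.mul_inv_cancel two_ne_zero ENNReal.ofNat_ne_top, mul_one]
    calc ENNReal.ofReal (Vq ^ (1/q)) = (ENNReal.ofReal Vq) ^ (1/q) :=
          (ENNReal.ofReal_rpow_of_nonneg hVqnn hinvq).symm
      _ ≤ (R ^ q) ^ (1/q) := ENNReal.rpow_le_rpow hsum2 hinvq
      _ = R := by
          rw [← ENNReal.rpow_mul, mul_one_div, div_self hqne, ENNReal.rpow_one]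
  have h2 : recErr q (WT q t) (infoSup n ε) (PhiStar q t n m) =
      ENNReal.ofReal (Vq ^ (1/q)) := le_antisymm hub (hlb _)
  refine ⟨le_antisymm (iInf_le _ _) (le_iInf fun Φ => ?_), h2⟩
  rw [h2]
  exact hlb Φ
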